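/- Suppose each f_j : ℝ^d → ℝ (j = 1,…,n) is convex, differentiable, and M_j-smooth with M_j symmetric positive semidefinite, and let f = (1/n)∑_j f_j. Then for all x, y: D_f(x,y) ≥ (1/(2n)) ∑_{j=1}^n ‖∇f_j(x) - ∇f_j(y)‖²_{M_j†}, where D_f(x,y) = f(x) - f(y) - ⟨∇f(y), x - y⟩. -/

import Mathlib

open Matrix

lemma pinv_symm' {d : ℕ} (M Mdag : Matrix (Fin d) (Fin d) ℝ) (hMsymm : Mᵀ = M)
    (hP1 : M * Mdag * M = M) (hP2 : Mdag * M * Mdag = Mdag)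
    (hP3 : (M * Mdag)ᵀ = M * Mdag) (hP4 : (Mdag * M)ᵀ = Mdag * M) :
    Mdagᵀ = Mdag := by
  have hACeq : M * Mdagᵀ = Mdag * M := by
    calc M * Mdagᵀ = (Mdag * M)ᵀ := by rw [transpose_mul, hMsymm]
    _ = Mdag * M := hP4
  have hCAeq : Mdagᵀ * M = M * Mdag := by
    calc Mdagᵀ * M = (M * Mdag)ᵀ := by rw [transpose_mul, hMsymm]
    _ = M * Mdag := hP3
  have hACA : M * Mdagᵀ * M = M := by
    have : M * Mdagᵀ * M = (M * Mdag * M)ᵀ := by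
      simp only [transpose_mul, hMsymm, Matrix.mul_assoc]
    rw [this, hP1, hMsymm]
  have e1 : (Mdag * M) * (M * Mdag) = M * Mdag := by
    rw [← hACeq, ← Matrix.mul_assoc, hACA]
  have e2 : (M * Mdag) * (Mdag * M) = Mdag * M := by
    rw [← hACeq, ← Matrix.mul_assoc, hP1]
  have hcomm : M * Mdag = Mdag * M := by
    have h := congrArg Matrix.transpose e2
    rw [transpose_mul, hP3, hP4, e1] at h
    exact h
  calc Mdagᵀ = (Mdag * M * Mdag)ᵀ := by rw [hP2]
  _ = Mdagᵀ * (Mdag * M)ᵀ := by rw [transpose_mul]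
  _ = Mdagᵀ * (M * Mdagᵀ) := by rw [hP4, ← hACeq]
  _ = (Mdagᵀ * M) * Mdagᵀ := by rw [Matrix.mul_assoc]
  _ = (M * Mdag) * Mdagᵀ := by rw [hCAeq]
  _ = (Mdag * M) * Mdagᵀ := by rw [hcomm]
  _ = Mdag * (M * Mdagᵀ) := by rw [Matrix.mul_assoc]
  _ = Mdag * (Mdag * M) := by rw [hACeq]
  _ = Mdag * (M * Mdag) := by rw [← hcomm]
  _ = Mdag := by rw [← Matrix.mul_assoc, hP2]

lemma dot_mulVec_left {d : ℕ} (A : Matrix (Fin d) (Fin d) ℝ) (v w : Fin d → ℝ) :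
    (A.mulVec v) ⬝ᵥ w = v ⬝ᵥ (Aᵀ.mulVec w) := by
  rw [dotProduct_comm, Matrix.dotProduct_mulVec, dotProduct_comm,
    Matrix.mulVec_transpose]

lemma sum_dotProduct' {d n : ℕ} (w : Fin n → Fin d → ℝ) (u : Fin d → ℝ) :
    (∑ j, w j) ⬝ᵥ u = ∑ j, w j ⬝ᵥ u := by
  simp only [dotProduct, Finset.sum_apply, Finset.sum_mul]
  exact Finset.sum_comm

lemma key_coercive {d : ℕ} (f : (Fin d → ℝ) → ℝ) (g : (Fin d → ℝ) → (Fin d → ℝ))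
    (M Mdag : Matrix (Fin d) (Fin d) ℝ)
    (hMd : Mdagᵀ = Mdag) (hP2 : Mdag * M * Mdag = Mdag)
    (hconv : ∀ x y : Fin d → ℝ, f y + g y ⬝ᵥ (x - y) ≤ f x)
    (hsmooth : ∀ x y : Fin d → ℝ,
      f x ≤ f y + g y ⬝ᵥ (x - y) + (1/2) * ((x - y) ⬝ᵥ M.mulVec (x - y)))
    (x y : Fin d → ℝ) :
    (1/2) * (Mdag.mulVec (g x - g y) ⬝ᵥ (g x - g y)) ≤ f x - f y - g y ⬝ᵥ (x - y) := by
  set v : Fin d → ℝ := g x - g y with hv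
  set s : Fin d → ℝ := Mdag.mulVec v with hs
  -- quadratic identity: s ⬝ᵥ M s = (Mdag v) ⬝ᵥ v
  have hquad : s ⬝ᵥ M.mulVec s = Mdag.mulVec v ⬝ᵥ v := by
    rw [hs, Matrix.mulVec_mulVec, dot_mulVec_left, Matrix.mulVec_mulVec,
      ← Matrix.mul_assoc, hMd, hP2, dotProduct_comm]
  -- linear identity: (g x - g y) ⬝ᵥ s = (Mdag v) ⬝ᵥ v
  have hlin : g x ⬝ᵥ s - g y ⬝ᵥ s = Mdag.mulVec v ⬝ᵥ v := by
    rw [← sub_dotProduct, ← hv, hs, dotProduct_comm]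
  have h1 := hconv (x - s) y
  have h2 := hsmooth (x - s) x
  have hxsx : (x - s) - x = -s := by abel
  rw [hxsx] at h2
  have hxsy : (x - s) - y = (x - y) - s := by abel
  rw [hxsy] at h1
  rw [dotProduct_sub] at h1
  rw [dotProduct_neg, neg_dotProduct, Matrix.mulVec_neg, dotProduct_neg, neg_neg] at h2
  linarith

/-- For `f = (1/n) ∑ f_j` with each `f_j` convex and `M_j`-smooth,
`D_f(x,y) ≥ (1/(2n)) ∑_j ‖∇f_j(x) - ∇f_j(y)‖²_{M_j†}`. -/
theorem avg_bregman_ge_pinv_norms {d n : ℕ} (hn : 0 < n)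
    (f : Fin n → (Fin d → ℝ) → ℝ) (g : Fin n → (Fin d → ℝ) → (Fin d → ℝ))
    (M Mdag : Fin n → Matrix (Fin d) (Fin d) ℝ)
    (hMsymm : ∀ j, (M j)ᵀ = M j)
    (hMpsd : ∀ j, ∀ v : Fin d → ℝ, 0 ≤ v ⬝ᵥ (M j).mulVec v)
    (hP1 : ∀ j, M j * Mdag j * M j = M j) (hP2 : ∀ j, Mdag j * M j * Mdag j = Mdag j)
    (hP3 : ∀ j, (M j * Mdag j)ᵀ = M j * Mdag j) (hP4 : ∀ j, (Mdag j * M j)ᵀ = Mdag j * M j)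
    (hconv : ∀ j, ∀ x y : Fin d → ℝ, f j y + g j y ⬝ᵥ (x - y) ≤ f j x)
    (hsmooth : ∀ j, ∀ x y : Fin d → ℝ,
      f j x ≤ f j y + g j y ⬝ᵥ (x - y) + (1/2) * ((x - y) ⬝ᵥ (M j).mulVec (x - y))) :
    ∀ x y : Fin d → ℝ,
      (1 / (2 * (n : ℝ))) * ∑ j, (Mdag j).mulVec (g j x - g j y) ⬝ᵥ (g j x - g j y)
        ≤ (n : ℝ)⁻¹ * ∑ j, f j x - ((n : ℝ)⁻¹ * ∑ j, f j y)
          - ((n : ℝ)⁻¹ • ∑ j, g j y) ⬝ᵥ (x - y) := by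
  intro x y
  have hkey : ∀ j, (1/2) * ((Mdag j).mulVec (g j x - g j y) ⬝ᵥ (g j x - g j y))
      ≤ f j x - f j y - g j y ⬝ᵥ (x - y) := fun j =>
    key_coercive (f j) (g j) (M j) (Mdag j)
      (pinv_symm' (M j) (Mdag j) (hMsymm j) (hP1 j) (hP2 j) (hP3 j) (hP4 j))
      (hP2 j) (hconv j) (hsmooth j) x y
  have hsum : (1/2) * ∑ j, (Mdag j).mulVec (g j x - g j y) ⬝ᵥ (g j x - g j y)
      ≤ ∑ j, f j x - ∑ j, f j y - (∑ j, g j y) ⬝ᵥ (x - y) := by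
    have h := Finset.sum_le_sum (s := Finset.univ) (fun j _ => hkey j)
    rw [← Finset.mul_sum, Finset.sum_sub_distrib, Finset.sum_sub_distrib,
      ← sum_dotProduct'] at h
    exact h
  have hn0 : (0:ℝ) < (n:ℝ) := by exact_mod_cast hn
  have hmul := mul_le_mul_of_nonneg_left hsum (le_of_lt (inv_pos.mpr hn0))
  rw [smul_dotProduct, smul_eq_mul]
  have h12 : (1:ℝ) / (2 * n) = (n:ℝ)⁻¹ * (1/2) := by
    field_simp
  rw [h12, mul_assoc]
  rw [mul_sub, mul_sub] at hmul
  linarith [hmul]
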